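/- Proposition 5′ (bosonic case) / Proposition 5, equation (prop5:1). Let μ ≥ 2 be an integer, let w₀, w₀' be free complex variables, and let (w_j, w_j') for j = 1, …, μ−1 be pairs all carrying the bosonic exchange factor H^b. Define D(u, u') = (u' − q w₁)(w₁' − q u) · Π_{j=1}^{μ−2} (w_j' − q w_{j+1})(w_{j+1}' − q w_j). Then D(w₀', w₀) ∼ D(w₀, w₀') with respect to the pairs (w₁, w₁'), …, (w_{μ−1}, w_{μ−1}'). (This is Proposition 5′, eq. (prop5:3), for ŝl(M|0) with 2 ≤ μ ≤ M, and equals Proposition 5, eq. (prop5:1), for ŝl(M|N) with 2 ≤ μ ≤ M, since all pairs involved are bosonic.) -/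

import Mathlib

/-- Bosonic exchange factor `H^b(u,v) = -(q²v - u)/(q²u - v)`. -/
noncomputable def Hb (q u v : ℂ) : ℂ := -(q ^ 2 * v - u) / (q ^ 2 * u - v)

/-- Fermionic exchange factor `H^f(u,v) = -(q²u - v)/(q²v - u)`. -/
noncomputable def Hf (q u v : ℂ) : ℂ := -(q ^ 2 * u - v) / (q ^ 2 * v - u)

/-- Exchange factor assignment for `U_q(sl^(M|N))`: bosonic for `j < M`,
the constant `-1` for `j = M`, fermionic for `j > M`. -/
noncomputable def Hex (M : ℕ) (q : ℂ) (j : ℕ) : ℂ → ℂ → ℂ :=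
  if j < M then Hb q else if j = M then fun _ _ => -1 else Hf q

/-- Interchange `w_j` and `w_j'` for every `j ∈ σ`. -/
def swapOn (σ : Finset ℕ) (w w' : ℕ → ℂ) : ℕ → ℂ := fun j => if j ∈ σ then w' j else w j

/-- Weak equality `F ∼ G` with respect to the pairs `(w_j, w_j')`, `j ∈ J`,
carrying exchange factors `H j`. -/
def WeakEq (J : Finset ℕ) (H : ℕ → ℂ → ℂ → ℂ) (w w' : ℕ → ℂ)
    (F G : (ℕ → ℂ) → (ℕ → ℂ) → ℂ) : Prop :=
  ∑ σ ∈ J.powerset, (∏ j ∈ σ, H j (w' j) (w j)) * F (swapOn σ w w') (swapOn σ w' w)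
    = ∑ σ ∈ J.powerset, (∏ j ∈ σ, H j (w' j) (w j)) * G (swapOn σ w w') (swapOn σ w' w)

/-- `D(u, u') = (u' − q w₁)(w₁' − q u) · Π_{j=1}^{μ−2} (w_j' − q w_{j+1})(w_{j+1}' − q w_j)`. -/
noncomputable def Dbos (q : ℂ) (μ : ℕ) (x y : ℂ) (u u' : ℕ → ℂ) : ℂ :=
  (y - q * u 1) * (u' 1 - q * x) *
    ∏ j ∈ Finset.Ico 1 (μ - 1), (u' j - q * u (j + 1)) * (u' (j + 1) - q * u j)

/-- Auxiliary product `E_{a,b}(u,u') = (u'_a − q² u_a) Π_{j=a}^{b-2} (u'_j − q u_{j+1})(u'_{j+1} − q u_j)`. -/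
noncomputable def Ebos (q : ℂ) (a b : ℕ) (u u' : ℕ → ℂ) : ℂ :=
  (u' a - q ^ 2 * u a) *
    ∏ j ∈ Finset.Ico a (b - 1), (u' j - q * u (j + 1)) * (u' (j + 1) - q * u j)

lemma swapOn_not_mem {σ : Finset ℕ} (w w' : ℕ → ℂ) {j : ℕ} (h : j ∉ σ) :
    swapOn σ w w' j = w j := by simp [swapOn, h]

lemma swapOn_insert_of_ne (σ : Finset ℕ) (w w' : ℕ → ℂ) {a j : ℕ} (h : j ≠ a) :
    swapOn (insert a σ) w w' j = swapOn σ w w' j := by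
  simp [swapOn, Finset.mem_insert, h]

lemma swapOn_insert_self (σ : Finset ℕ) (w w' : ℕ → ℂ) (a : ℕ) :
    swapOn (insert a σ) w w' a = w' a := by
  simp [swapOn]

/-- The scalar identity behind one peeling step. -/
lemma peel_identity (q A A' B B' : ℂ) (hA : q ^ 2 * A' ≠ A) :
    (A' - q ^ 2 * A) * ((A' - q * B) * (B' - q * A)) +
      Hb q A' A * ((A - q ^ 2 * A') * ((A - q * B) * (B' - q * A'))) =
    (A' - q ^ 2 * A) * (A' - A) * (B' - q ^ 2 * B) := by
  have h : q ^ 2 * A' - A ≠ 0 := sub_ne_zero.mpr hA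
  rw [Hb, div_mul_eq_mul_div, add_div' _ _ _ h, div_eq_iff h]
  ring

/-- Key lemma: the weighted alternating sum of `Ebos` over all swaps vanishes. -/
lemma keyE (q : ℂ) (w w' : ℕ → ℂ) :
    ∀ n, 1 ≤ n → ∀ a, (∀ j ∈ Finset.Ico a (a + n), q ^ 2 * w' j ≠ w j) →
      ∑ σ ∈ (Finset.Ico a (a + n)).powerset,
        (∏ j ∈ σ, Hb q (w' j) (w j)) *
          Ebos q a (a + n) (swapOn σ w w') (swapOn σ w' w) = 0 := by
  intro n
  induction n with
  | zero => intro h; omega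
  | succ m ih =>
    intro _ a hden
    rcases Nat.eq_zero_or_pos m with hm | hm
    · -- base case: n = 1
      subst hm
      have h1 : Finset.Ico a (a + 1) = {a} := by simp
      have h2 : ({a} : Finset ℕ) = insert a ∅ := rfl
      rw [h1, h2, Finset.sum_powerset_insert (Finset.notMem_empty a),
        Finset.powerset_empty, Finset.sum_singleton, Finset.sum_singleton]
      have hE : a + 1 - 1 = a := by omega
      have hd : q ^ 2 * w' a - w a ≠ 0 := by
        have := hden a (by simp)
        exact sub_ne_zero.mpr this
      simp only [Ebos, hE, Finset.Ico_self, Finset.prod_empty, mul_one,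
        Finset.prod_singleton, swapOn]
      simp only [Finset.notMem_empty, if_false, Finset.mem_singleton, if_true]
      simp only [Finset.insert_empty, Finset.prod_singleton, Finset.mem_singleton, if_true]
      rw [Hb]
      have hd' : w' a * q ^ 2 - w a ≠ 0 := by rwa [mul_comm]
      field_simp
      ring
    · -- inductive step: m ≥ 1
      have ha : a ∉ Finset.Ico (a + 1) (a + (m + 1)) := by simp
      have hIco : Finset.Ico a (a + (m + 1)) = insert a (Finset.Ico (a + 1) (a + (m + 1))) := by
        ext x; simp only [Finset.mem_Ico, Finset.mem_insert]; omega
      rw [hIco, Finset.sum_powerset_insert ha, ← Finset.sum_add_distrib]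
      have key : ∀ σ ∈ (Finset.Ico (a + 1) (a + (m + 1))).powerset,
          (∏ j ∈ σ, Hb q (w' j) (w j)) *
              Ebos q a (a + (m + 1)) (swapOn σ w w') (swapOn σ w' w) +
            (∏ j ∈ insert a σ, Hb q (w' j) (w j)) *
              Ebos q a (a + (m + 1)) (swapOn (insert a σ) w w') (swapOn (insert a σ) w' w)
          = ((w' a - q ^ 2 * w a) * (w' a - w a)) *
            ((∏ j ∈ σ, Hb q (w' j) (w j)) *
              Ebos q (a + 1) (a + (m + 1)) (swapOn σ w w') (swapOn σ w' w)) := by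
        intro σ hσ
        have hσ' := Finset.mem_powerset.mp hσ
        have haσ : a ∉ σ := fun h => ha (hσ' h)
        set u := swapOn σ w w' with hu
        set u' := swapOn σ w' w with hu'
        have hua : u a = w a := swapOn_not_mem w w' haσ
        have hu'a : u' a = w' a := swapOn_not_mem w' w haσ
        -- insert-a swap agrees with σ-swap away from a
        have hins : ∀ j, j ≠ a → swapOn (insert a σ) w w' j = u j :=
          fun j hj => swapOn_insert_of_ne σ w w' hj
        have hins' : ∀ j, j ≠ a → swapOn (insert a σ) w' w j = u' j :=
          fun j hj => swapOn_insert_of_ne σ w' w hj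
        -- split off the j = a factor of the Ebos products
        have hsub : a + (m + 1) - 1 = a + m := by omega
        have hIco2 : Finset.Ico a (a + m) = insert a (Finset.Ico (a + 1) (a + m)) := by
          ext x; simp only [Finset.mem_Ico, Finset.mem_insert]; omega
        have ha2 : a ∉ Finset.Ico (a + 1) (a + m) := by simp
        have hprod : ∀ (v v' : ℕ → ℂ), (∀ j, a + 1 ≤ j → v j = u j) →
            (∀ j, a + 1 ≤ j → v' j = u' j) →
            ∏ j ∈ Finset.Ico (a + 1) (a + m), (v' j - q * v (j + 1)) * (v' (j + 1) - q * v j)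
              = ∏ j ∈ Finset.Ico (a + 1) (a + m),
                  (u' j - q * u (j + 1)) * (u' (j + 1) - q * u j) := by
          intro v v' hv hv'
          refine Finset.prod_congr rfl fun j hj => ?_
          have hj1 : a + 1 ≤ j := (Finset.mem_Ico.mp hj).1
          rw [hv j hj1, hv' j hj1, hv (j + 1) (by omega), hv' (j + 1) (by omega)]
        set R := ∏ j ∈ Finset.Ico (a + 1) (a + m),
            (u' j - q * u (j + 1)) * (u' (j + 1) - q * u j) with hR
        have hE1 : Ebos q a (a + (m + 1)) u u'
            = (u' a - q ^ 2 * u a) * (((u' a - q * u (a + 1)) * (u' (a + 1) - q * u a)) * R) := by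
          rw [Ebos, hsub, hIco2, Finset.prod_insert ha2]
        have hE2 : Ebos q a (a + (m + 1)) (swapOn (insert a σ) w w') (swapOn (insert a σ) w' w)
            = (w a - q ^ 2 * w' a) *
              (((w a - q * u (a + 1)) * (u' (a + 1) - q * w' a)) * R) := by
          rw [Ebos, hsub, hIco2, Finset.prod_insert ha2,
            hprod (swapOn (insert a σ) w w') (swapOn (insert a σ) w' w)
              (fun j hj => hins j (by omega)) (fun j hj => hins' j (by omega)),
            swapOn_insert_self σ w w' a, swapOn_insert_self σ w' w a,
            hins (a + 1) (by omega), hins' (a + 1) (by omega)]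
        have hE3 : Ebos q (a + 1) (a + (m + 1)) u u'
            = (u' (a + 1) - q ^ 2 * u (a + 1)) * R := by
          rw [Ebos, show a + (m + 1) - 1 = a + m from by omega]
        rw [hE1, hE2, hE3, Finset.prod_insert haσ, hua, hu'a]
        have hd : q ^ 2 * w' a ≠ w a := hden a (by simp)
        have := peel_identity q (w a) (w' a) (u (a + 1)) (u' (a + 1)) hd
        set P := ∏ j ∈ σ, Hb q (w' j) (w j)
        calc P * ((w' a - q ^ 2 * w a) * ((w' a - q * u (a + 1)) * (u' (a + 1) - q * w a) * R))
              + Hb q (w' a) (w a) * P *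
                ((w a - q ^ 2 * w' a) * ((w a - q * u (a + 1)) * (u' (a + 1) - q * w' a) * R))
            = ((w' a - q ^ 2 * w a) * ((w' a - q * u (a + 1)) * (u' (a + 1) - q * w a)) +
                Hb q (w' a) (w a) *
                  ((w a - q ^ 2 * w' a) * ((w a - q * u (a + 1)) * (u' (a + 1) - q * w' a))))
                * (P * R) := by ring
          _ = ((w' a - q ^ 2 * w a) * (w' a - w a) * (u' (a + 1) - q ^ 2 * u (a + 1))) * (P * R) := by
                rw [this]
          _ = (w' a - q ^ 2 * w a) * (w' a - w a) *
                (P * ((u' (a + 1) - q ^ 2 * u (a + 1)) * R)) := by ring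
      rw [Finset.sum_congr rfl key, ← Finset.mul_sum]
      have hIH := ih hm (a + 1) (by
        intro j hj
        apply hden
        simp only [Finset.mem_Ico] at hj ⊢
        omega)
      rw [show a + 1 + m = a + (m + 1) from by omega] at hIH
      rw [hIH, mul_zero]

/-- Proposition 5′ (bosonic case) / Proposition 5, eq. (prop5:1):
`D(w₀', w₀) ∼ D(w₀, w₀')` with respect to the bosonic pairs `(w₁, w₁'), …, (w_{μ−1}, w_{μ−1}')`. -/
theorem proposition5_bosonic (μ : ℕ) (hμ : 2 ≤ μ)
    (q : ℂ) (hq : q ≠ 0) (hq2 : q ^ 2 ≠ 1) (w w' : ℕ → ℂ)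
    (hden : ∀ j ∈ Finset.Ico 1 μ, q ^ 2 * w' j ≠ w j) :
    WeakEq (Finset.Ico 1 μ) (fun _ => Hb q) w w'
      (fun u u' => Dbos q μ (u' 0) (u 0) u u')
      (fun u u' => Dbos q μ (u 0) (u' 0) u u') := by
  unfold WeakEq
  rw [← sub_eq_zero, ← Finset.sum_sub_distrib]
  have key : ∀ σ ∈ (Finset.Ico 1 μ).powerset,
      (∏ j ∈ σ, Hb q (w' j) (w j)) *
          Dbos q μ (swapOn σ w' w 0) (swapOn σ w w' 0) (swapOn σ w w') (swapOn σ w' w)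
        - (∏ j ∈ σ, Hb q (w' j) (w j)) *
          Dbos q μ (swapOn σ w w' 0) (swapOn σ w' w 0) (swapOn σ w w') (swapOn σ w' w)
      = (w 0 - w' 0) * ((∏ j ∈ σ, Hb q (w' j) (w j)) *
          Ebos q 1 μ (swapOn σ w w') (swapOn σ w' w)) := by
    intro σ hσ
    have hσ' := Finset.mem_powerset.mp hσ
    have h0 : (0 : ℕ) ∉ σ := by
      intro h
      have := hσ' h
      simp [Finset.mem_Ico] at this
    have h0w : swapOn σ w w' 0 = w 0 := swapOn_not_mem w w' h0
    have h0w' : swapOn σ w' w 0 = w' 0 := swapOn_not_mem w' w h0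
    rw [h0w, h0w']
    set u := swapOn σ w w'
    set u' := swapOn σ w' w
    rw [Dbos, Dbos, Ebos]
    set P := ∏ j ∈ Finset.Ico 1 (μ - 1), (u' j - q * u (j + 1)) * (u' (j + 1) - q * u j)
    ring
  rw [Finset.sum_congr rfl key, ← Finset.mul_sum]
  have hE : ∑ σ ∈ (Finset.Ico 1 μ).powerset,
      (∏ j ∈ σ, Hb q (w' j) (w j)) * Ebos q 1 μ (swapOn σ w w') (swapOn σ w' w) = 0 := by
    have h := keyE q w w' (μ - 1) (by omega) 1 (by
      intro j hj
      apply hden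
      simp only [Finset.mem_Ico] at hj ⊢
      omega)
    have hμ' : 1 + (μ - 1) = μ := by omega
    rwa [hμ'] at h
  rw [hE, mul_zero]
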